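/- For every δ with 0 < δ < 1/2, in the 3×3 zero-sum matrix game with row-player payoff matrix U = [[1,δ,1/2],[δ,1,1/2],[0,0,1/2]], the column player's Nash equilibrium strategy is uniquely (0,0,1), the game value is 1/2, and the portfolio consisting of only the single column strategy (0,0,1) has pessimistic exploitability equal to 1/2: the row strategy (0,0,1) is a Nash equilibrium of the restricted game, and against it the column player can hold the row player to payoff 0. -/

import Mathlib

open Finset Matrix

noncomputable section

/-- Mixed strategies over a finite action set. -/
def simplex (α : Type*) [Fintype α] : Set (α → ℝ) :=
  {x | (∀ i, 0 ≤ x i) ∧ ∑ i, x i = 1}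

/-- Expected payoff to the row (maximizing) player. -/
def pay {α β : Type*} [Fintype α] [Fintype β]
    (U : Matrix α β ℝ) (x : α → ℝ) (y : β → ℝ) : ℝ :=
  ∑ i, ∑ j, x i * U i j * y j

/-- Nash equilibrium of the zero-sum game with row payoff matrix `U`. -/
def isNash {α β : Type*} [Fintype α] [Fintype β]
    (U : Matrix α β ℝ) (x : α → ℝ) (y : β → ℝ) : Prop :=
  x ∈ simplex α ∧ y ∈ simplex β ∧
  (∀ x' ∈ simplex α, pay U x' y ≤ pay U x y) ∧
  (∀ y' ∈ simplex β, pay U x y ≤ pay U x y')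

/-- Worst-case (over pure columns) payoff of row strategy `x`. -/
def wc {α β : Type*} [Fintype α] [Fintype β]
    (U : Matrix α β ℝ) (x : α → ℝ) : ℝ :=
  sInf (Set.range fun j : β => ∑ i, x i * U i j)

end

theorem stmt2 (δ : ℝ) (h0 : 0 < δ) (h1 : δ < 1/2) :
    let U : Matrix (Fin 3) (Fin 3) ℝ := !![1,δ,1/2; δ,1,1/2; 0,0,1/2]
    let UR : Matrix (Fin 3) (Fin 1) ℝ := Matrix.of fun i _ => U i 2
    (∀ x y, isNash U x y → y = ![0,0,1]) ∧
    (∀ x y, isNash U x y → pay U x y = 1/2) ∧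
    (∃ yr, isNash UR ![0,0,1] yr) ∧
    wc U ![0,0,1] = 0 ∧
    (∀ x y, isNash UR x y → 1/2 - wc U x ≤ 1/2) ∧
    (∃ x y, isNash UR x y ∧ 1/2 - wc U x = 1/2) := by
  intro U UR
  -- expansion of pay for the full game
  have hpay : ∀ x y : Fin 3 → ℝ, pay U x y =
      x 0 * (y 0 + δ * y 1 + y 2 / 2) + x 1 * (δ * y 0 + y 1 + y 2 / 2)
      + x 2 * (y 2 / 2) := by
    intro x y
    simp [pay, U, Fin.sum_univ_three]
    ring
  -- expansion of pay for the restricted game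
  have hpayR : ∀ (x : Fin 3 → ℝ) (y : Fin 1 → ℝ), pay UR x y =
      (x 0 + x 1 + x 2) * (1/2) * y 0 := by
    intro x y
    simp [pay, UR, U, Fin.sum_univ_three, Fin.sum_univ_one]
    ring
  -- everything in the simplex is Nash for the restricted game
  have hRNash : ∀ x ∈ simplex (Fin 3), isNash UR x ![1] := by
    intro x hx
    have hx1 : x 0 + x 1 + x 2 = 1 := by
      have := hx.2; rwa [Fin.sum_univ_three] at this
    refine ⟨hx, ⟨?_, ?_⟩, ?_, ?_⟩
    · intro i; fin_cases i <;> norm_num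
    · simp
    · intro x' hx'
      have hx'1 : x' 0 + x' 1 + x' 2 = 1 := by
        have := hx'.2; rwa [Fin.sum_univ_three] at this
      rw [hpayR, hpayR, hx1, hx'1]
    · intro y' hy'
      have hy1 : y' 0 = 1 := by
        have := hy'.2; rwa [Fin.sum_univ_one] at this
      rw [hpayR, hpayR, hy1]
      norm_num
  have he3simp : (![0,0,1] : Fin 3 → ℝ) ∈ simplex (Fin 3) := by
    constructor
    · intro i; fin_cases i <;> norm_num
    · rw [Fin.sum_univ_three]; norm_num; rfl
  -- uniqueness of the column Nash strategy
  have huniq : ∀ x y, isNash U x y → y = ![0,0,1] ∧ pay U x y = 1/2 := by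
    intro x y hN
    obtain ⟨hx, hy, hrow, hcol⟩ := hN
    have hy0 := hy.1 0
    have hy1 := hy.1 1
    have hysum : y 0 + y 1 + y 2 = 1 := by
      have := hy.2; rwa [Fin.sum_univ_three] at this
    have hx1 : x 0 + x 1 + x 2 = 1 := by
      have := hx.2; rwa [Fin.sum_univ_three] at this
    -- column deviation to pure column 2: value ≤ 1/2
    have hle : pay U x y ≤ 1/2 := by
      have h := hcol ![0,0,1] he3simp
      have hp : pay U x ![0,0,1] = (x 0 + x 1 + x 2) * (1/2) := by
        rw [hpay]
        simp only [Matrix.cons_val_zero, Matrix.cons_val_one, Matrix.head_cons,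
          Matrix.cons_val_two, Matrix.tail_cons]
        ring
      rw [hp, hx1] at h
      linarith
    -- row deviation to (1/2,1/2,0): value ≥ 1/2 + δ/2 (y0+y1)
    have hge : 1/2 + δ/2 * (y 0 + y 1) ≤ pay U x y := by
      have hmem : (![1/2,1/2,0] : Fin 3 → ℝ) ∈ simplex (Fin 3) := by
        constructor
        · intro i; fin_cases i <;> norm_num
        · rw [Fin.sum_univ_three]; norm_num; rfl
      have h := hrow ![1/2,1/2,0] hmem
      have hp : pay U ![1/2,1/2,0] y =
          (1/2) * (y 0 + δ * y 1 + y 2 / 2) + (1/2) * (δ * y 0 + y 1 + y 2 / 2) := by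
        rw [hpay]
        simp only [Matrix.cons_val_zero, Matrix.cons_val_one, Matrix.head_cons,
          Matrix.cons_val_two, Matrix.tail_cons]
        ring
      rw [hp] at h
      nlinarith
    have hsum0 : y 0 + y 1 ≤ 0 := by
      by_contra hc
      push_neg at hc
      nlinarith
    have hy0' : y 0 = 0 := by linarith
    have hy1' : y 1 = 0 := by linarith
    have hy2' : y 2 = 1 := by linarith
    refine ⟨?_, ?_⟩
    · funext i
      fin_cases i <;> simp [hy0', hy1', hy2']
    · have hp : pay U x y = (x 0 + x 1 + x 2) * (1/2) := by
        rw [hpay, hy0', hy1', hy2']; ring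
      rw [hp, hx1]; norm_num
  have hUnn : ∀ i j : Fin 3, 0 ≤ U i j := by
    intro i j
    fin_cases i <;> fin_cases j
    · show (0:ℝ) ≤ 1; norm_num
    · show (0:ℝ) ≤ δ; exact h0.le
    · show (0:ℝ) ≤ 1/2; norm_num
    · show (0:ℝ) ≤ δ; exact h0.le
    · show (0:ℝ) ≤ 1; norm_num
    · show (0:ℝ) ≤ 1/2; norm_num
    · show (0:ℝ) ≤ 0; norm_num
    · show (0:ℝ) ≤ 0; norm_num
    · show (0:ℝ) ≤ 1/2; norm_num
  -- wc of e3 is 0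
  have hwc : wc U ![0,0,1] = 0 := by
    have hf0 : (∑ i, (![0,0,1] : Fin 3 → ℝ) i * U i 0) = 0 := by
      rw [Fin.sum_univ_three,
        show (![0,0,1] : Fin 3 → ℝ) 0 = 0 from rfl,
        show (![0,0,1] : Fin 3 → ℝ) 1 = 0 from rfl,
        show (![0,0,1] : Fin 3 → ℝ) 2 = 1 from rfl,
        show U 2 0 = 0 from rfl]
      ring
    have hfnn : ∀ j : Fin 3, 0 ≤ ∑ i, (![0,0,1] : Fin 3 → ℝ) i * U i j := by
      intro j
      rw [Fin.sum_univ_three,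
        show (![0,0,1] : Fin 3 → ℝ) 0 = 0 from rfl,
        show (![0,0,1] : Fin 3 → ℝ) 1 = 0 from rfl,
        show (![0,0,1] : Fin 3 → ℝ) 2 = 1 from rfl]
      simpa using hUnn 2 j
    rw [wc]
    apply le_antisymm
    · exact csInf_le (Set.Finite.bddBelow (Set.finite_range _)) ⟨0, hf0⟩
    · exact le_csInf (Set.range_nonempty _) (by rintro b ⟨j, rfl⟩; exact hfnn j)
  -- wc is nonneg on the simplex
  have hwcnn : ∀ x ∈ simplex (Fin 3), 0 ≤ wc U x := by
    intro x hx
    apply le_csInf (Set.range_nonempty _)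
    rintro b ⟨j, rfl⟩
    exact Finset.sum_nonneg fun i _ => mul_nonneg (hx.1 i) (hUnn i j)
  refine ⟨fun x y h => (huniq x y h).1, fun x y h => (huniq x y h).2,
    ⟨![1], hRNash _ he3simp⟩, hwc, ?_, ⟨![0,0,1], ![1], hRNash _ he3simp, by rw [hwc]; norm_num⟩⟩
  intro x y hN
  have := hwcnn x hN.1
  linarith
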